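/- Support extension holds in LG^ω: if Σ, h ; Γ ⊢ B[h a⃗ /x] is provable, where {a⃗} = supp(B), h ∉ Σ, and h does not occur free in Γ or B, and c⃗ is a list of nominal constants not in supp(B), then Σ, h' ; Γ ⊢ B[h' a⃗ c⃗ /x] is provable for a fresh variable h' ∉ Σ. -/

import Mathlib

/-- Simply typed λ-terms (types elided) over a signature with a countably
infinite set of nominal constants (`nom`), other constants (`cst`) and
variables (`var`, de Bruijn style). -/
inductive Tm : Type
  | nom : ℕ → Tm
  | cst : ℕ → Tm
  | var : ℕ → Tm
  | app : Tm → Tm → Tm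
  | lam : Tm → Tm
  deriving DecidableEq

namespace Tm

/-- Action of a permutation of nominal constants on a term:
`π.a = π(a)` for nominal constants, other constants and variables are fixed,
and the action distributes over application and abstraction. -/
def perm (π : Equiv.Perm ℕ) : Tm → Tm
  | nom a => nom (π a)
  | cst c => cst c
  | var x => var x
  | app m n => app (perm π m) (perm π n)
  | lam m => lam (perm π m)

/-- The support of a term: the set of nominal constants occurring in it. -/
def supp : Tm → Finset ℕ
  | nom a => {a}
  | cst _ => ∅
  | var _ => ∅
  | app m n => supp m ∪ supp n
  | lam m => supp m

/-- Renaming of variables (with proper treatment of binders). -/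
def rename (f : ℕ → ℕ) : Tm → Tm
  | nom a => nom a
  | cst c => cst c
  | var x => var (f x)
  | app m n => app (rename f m) (rename f n)
  | lam m => lam (rename (fun k => match k with | 0 => 0 | k+1 => f k + 1) m)

/-- Lifting a simultaneous substitution under a binder. -/
def upS (θ : ℕ → Tm) : ℕ → Tm
  | 0 => var 0
  | x+1 => rename Nat.succ (θ x)

/-- Capture-avoiding simultaneous substitution. -/
def subst (θ : ℕ → Tm) : Tm → Tm
  | nom a => nom a
  | cst c => cst c
  | var x => θ x
  | app m n => app (subst θ m) (subst θ n)
  | lam m => lam (subst (upS θ) m)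

end Tm

/-- A finite permutation of nominal constants. -/
def FinitePerm (π : Equiv.Perm ℕ) : Prop := {a : ℕ | π a ≠ a}.Finite

/-- A Σ-substitution: a substitution whose range contains no
nominal constants (all terms in the range have empty support). -/
def SigmaSub (θ : ℕ → Tm) : Prop := ∀ x, (θ x).supp = ∅

/-- First-order formulas of the logic, with quantifiers `all`, `ex` and the
generic quantifier `nab` (∇) binding de Bruijn index 0. -/
inductive Fm : Type
  | top : Fm
  | bot : Fm
  | atom : ℕ → List Tm → Fm
  | eq : Tm → Tm → Fm
  | natF : Tm → Fm
  | and : Fm → Fm → Fm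
  | or : Fm → Fm → Fm
  | imp : Fm → Fm → Fm
  | all : Fm → Fm
  | ex : Fm → Fm
  | nab : Fm → Fm

namespace Fm

/-- Action of a permutation of nominal constants on a formula. -/
def perm (π : Equiv.Perm ℕ) : Fm → Fm
  | top => top
  | bot => bot
  | atom p ts => atom p (ts.map (Tm.perm π))
  | eq s t => eq (Tm.perm π s) (Tm.perm π t)
  | natF t => natF (Tm.perm π t)
  | and B C => and (perm π B) (perm π C)
  | or B C => or (perm π B) (perm π C)
  | imp B C => imp (perm π B) (perm π C)
  | all B => all (perm π B)
  | ex B => ex (perm π B)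
  | nab B => nab (perm π B)

/-- The support of a formula: the nominal constants occurring in it. -/
def supp : Fm → Finset ℕ
  | top => ∅
  | bot => ∅
  | atom _ ts => ts.foldr (fun t s => t.supp ∪ s) ∅
  | eq s t => s.supp ∪ t.supp
  | natF t => t.supp
  | and B C => supp B ∪ supp C
  | or B C => supp B ∪ supp C
  | imp B C => supp B ∪ supp C
  | all B => supp B
  | ex B => supp B
  | nab B => supp B

/-- Capture-avoiding simultaneous substitution on formulas. -/
def substF (θ : ℕ → Tm) : Fm → Fm
  | top => top
  | bot => bot
  | atom p ts => atom p (ts.map (Tm.subst θ))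
  | eq s t => eq (Tm.subst θ s) (Tm.subst θ t)
  | natF t => natF (Tm.subst θ t)
  | and B C => and (substF θ B) (substF θ C)
  | or B C => or (substF θ B) (substF θ C)
  | imp B C => imp (substF θ B) (substF θ C)
  | all B => all (substF (Tm.upS θ) B)
  | ex B => ex (substF (Tm.upS θ) B)
  | nab B => nab (substF (Tm.upS θ) B)

/-- Instantiation of the outermost bound variable (index 0) by a term,
i.e. `B[t/x]`. -/
def inst (B : Fm) (t : Tm) : Fm :=
  substF (fun n => match n with | 0 => t | n+1 => Tm.var n) B

end Fm

namespace Tm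

/-- Free variables of a term relative to a binder depth `k`. -/
def fv (k : ℕ) : Tm → Finset ℕ
  | nom _ => ∅
  | cst _ => ∅
  | var x => if k ≤ x then {x - k} else ∅
  | app m n => fv k m ∪ fv k n
  | lam m => fv (k+1) m

end Tm

namespace Fm

/-- Free variables of a formula relative to a binder depth `k`. -/
def fv (k : ℕ) : Fm → Finset ℕ
  | top => ∅
  | bot => ∅
  | atom _ ts => ts.foldr (fun t s => t.fv k ∪ s) ∅
  | eq s t => s.fv k ∪ t.fv k
  | natF t => t.fv k
  | and B C => fv k B ∪ fv k C
  | or B C => fv k B ∪ fv k C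
  | imp B C => fv k B ∪ fv k C
  | all B => fv (k+1) B
  | ex B => fv (k+1) B
  | nab B => fv (k+1) B

end Fm

/-- Free variables of a context. -/
def fvCtx (Γ : List Fm) : Finset ℕ := Γ.foldr (fun B s => B.fv 0 ∪ s) ∅

/-- The (canonically ordered) list of nominal constants in the support of a
formula, as terms. -/
def suppNoms (B : Fm) : List Tm := ((Fm.supp B).sort (· ≤ ·)).map Tm.nom

/-- Iterated application. -/
def appList (t : Tm) (args : List Tm) : Tm := args.foldl Tm.app t

/-- The raised instantiation `h c⃗` of a fresh variable `h` applied to the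
support `{c⃗}` of `B`, used by the ∀R and ∃L rules. -/
def raised (h : ℕ) (B : Fm) : Tm := appList (Tm.var h) (suppNoms B)

/-- Zero, for the natural-number type `nt`. -/
def zeroTm : Tm := Tm.cst 0
/-- Successor, for the natural-number type `nt`. -/
def succTm (t : Tm) : Tm := Tm.app (Tm.cst 1) t

/-- Derivability in `LG^ω`, the logic `LG` extended with equality rules,
definition (fixed point) rules and natural number induction.

`Deriv u h Γ C` means: there is a derivation of the sequent `Σ ; Γ ⊢ C`
of height at most `h` (heights are ordinals, since `eqL` may have infinitely
many premises).  The parameter `u` gives, for each defined predicate `p` and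
argument list `t⃗`, the instantiated body `B[t⃗/x⃗]` of its definition clause
`p x⃗ ≜ B`.  Each rule allows its premises at any strictly smaller height, so
`Deriv u h Γ C` is monotone in `h` and `ht(Π) ≤ h` is expressed directly. -/
inductive Deriv (u : ℕ → List Tm → Fm) : Ordinal → List Fm → Fm → Prop
  | idPi {h Γ B B'} (π π' : Equiv.Perm ℕ) :
      Fm.perm π B = Fm.perm π' B' → Deriv u h (B :: Γ) B'
  | exch {h Γ Γ' C} : Γ.Perm Γ' → Deriv u h Γ C → Deriv u h Γ' C
  | contr {h h' Γ B C} : h' < h →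
      Deriv u h' (B :: B :: Γ) C → Deriv u h (B :: Γ) C
  | mc {h h1 h2 Δ Γ B C} : h1 < h → h2 < h →
      Deriv u h1 Δ B → Deriv u h2 (B :: Γ) C → Deriv u h (Δ ++ Γ) C
  | botL {h Γ C} : Deriv u h (Fm.bot :: Γ) C
  | topR {h Γ} : Deriv u h Γ Fm.top
  | andL1 {h h' Γ B1 B2 C} : h' < h →
      Deriv u h' (B1 :: Γ) C → Deriv u h (Fm.and B1 B2 :: Γ) C
  | andL2 {h h' Γ B1 B2 C} : h' < h →
      Deriv u h' (B2 :: Γ) C → Deriv u h (Fm.and B1 B2 :: Γ) C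
  | andR {h h1 h2 Γ B C} : h1 < h → h2 < h →
      Deriv u h1 Γ B → Deriv u h2 Γ C → Deriv u h Γ (Fm.and B C)
  | orL {h h1 h2 Γ B D C} : h1 < h → h2 < h →
      Deriv u h1 (B :: Γ) C → Deriv u h2 (D :: Γ) C →
      Deriv u h (Fm.or B D :: Γ) C
  | orR1 {h h' Γ B1 B2} : h' < h → Deriv u h' Γ B1 → Deriv u h Γ (Fm.or B1 B2)
  | orR2 {h h' Γ B1 B2} : h' < h → Deriv u h' Γ B2 → Deriv u h Γ (Fm.or B1 B2)
  | impL {h h1 h2 Γ B D C} : h1 < h → h2 < h →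
      Deriv u h1 Γ B → Deriv u h2 (D :: Γ) C → Deriv u h (Fm.imp B D :: Γ) C
  | impR {h h' Γ B C} : h' < h →
      Deriv u h' (B :: Γ) C → Deriv u h Γ (Fm.imp B C)
  | allL {h h' Γ B C} (t : Tm) : h' < h →
      Deriv u h' (Fm.inst B t :: Γ) C → Deriv u h (Fm.all B :: Γ) C
  | allR {h h' Γ B} (hv : ℕ) : h' < h → hv ∉ fvCtx Γ ∪ (Fm.all B).fv 0 →
      Deriv u h' Γ (Fm.inst B (raised hv B)) → Deriv u h Γ (Fm.all B)
  | exL {h h' Γ B C} (hv : ℕ) : h' < h →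
      hv ∉ fvCtx Γ ∪ (Fm.ex B).fv 0 ∪ C.fv 0 →
      Deriv u h' (Fm.inst B (raised hv B) :: Γ) C →
      Deriv u h (Fm.ex B :: Γ) C
  | exR {h h' Γ B} (t : Tm) : h' < h →
      Deriv u h' Γ (Fm.inst B t) → Deriv u h Γ (Fm.ex B)
  | nabL {h h' Γ B C} (a : ℕ) : h' < h → a ∉ Fm.supp B →
      Deriv u h' (Fm.inst B (Tm.nom a) :: Γ) C → Deriv u h (Fm.nab B :: Γ) C
  | nabR {h h' Γ B} (a : ℕ) : h' < h → a ∉ Fm.supp B →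
      Deriv u h' Γ (Fm.inst B (Tm.nom a)) → Deriv u h Γ (Fm.nab B)
  | eqR {h Γ t} : Deriv u h Γ (Fm.eq t t)
  | eqL {h Γ C s t} (hf : (ℕ → Tm) → Ordinal) :
      (∀ θ, hf θ < h) →
      (∀ θ, SigmaSub θ → Tm.subst θ s = Tm.subst θ t →
        Deriv u (hf θ) (Γ.map (Fm.substF θ)) (Fm.substF θ C)) →
      Deriv u h (Fm.eq s t :: Γ) C
  | defL {h h' Γ C p ts} : h' < h →
      Deriv u h' (u p ts :: Γ) C → Deriv u h (Fm.atom p ts :: Γ) C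
  | defR {h h' Γ p ts} : h' < h →
      Deriv u h' Γ (u p ts) → Deriv u h Γ (Fm.atom p ts)
  | natRz {h Γ} : Deriv u h Γ (Fm.natF zeroTm)
  | natRs {h h' Γ I} : h' < h →
      Deriv u h' Γ (Fm.natF I) → Deriv u h Γ (Fm.natF (succTm I))
  | natL {h h1 h2 h3 Γ C D I} (j : ℕ) : h1 < h → h2 < h → h3 < h →
      j ∉ (Fm.all D).fv 0 →
      Deriv u h1 [] (Fm.inst D zeroTm) →
      Deriv u h2 [Fm.inst D (Tm.var j)] (Fm.inst D (succTm (Tm.var j))) →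
      Deriv u h3 (Fm.inst D I :: Γ) C →
      Deriv u h (Fm.natF I :: Γ) C


private lemma contr_list.{v} {u : ℕ → List Tm → Fm} (Δ : List Fm) :
    ∀ (h : Ordinal.{v}) (Γ : List Fm) (C : Fm),
      Deriv u h (Δ ++ (Δ ++ Γ)) C → ∃ h' : Ordinal.{v}, Deriv u h' (Δ ++ Γ) C := by
  induction Δ with
  | nil => exact fun h Γ C d => ⟨h, d⟩
  | cons A Δ ih =>
    intro h Γ C d
    have p1 : ((A :: Δ) ++ ((A :: Δ) ++ Γ)).Perm (A :: A :: (Δ ++ (Δ ++ Γ))) := by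
      simpa using (List.perm_middle (a := A) (l₁ := Δ) (l₂ := Δ ++ Γ)).cons A
    have d1 : Deriv u h (A :: A :: (Δ ++ (Δ ++ Γ))) C := Deriv.exch p1 d
    have d2 : Deriv u (Order.succ h) (A :: (Δ ++ (Δ ++ Γ))) C :=
      Deriv.contr (Order.lt_succ h) d1
    have p2 : (A :: (Δ ++ (Δ ++ Γ))).Perm (Δ ++ (Δ ++ (A :: Γ))) :=
      (((List.perm_middle (a := A) (l₁ := Δ) (l₂ := Γ)).append_left Δ).trans
        List.perm_middle).symm
    obtain ⟨h', d3⟩ := ih (Order.succ h) (A :: Γ) C (Deriv.exch p2 d2)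
    refine ⟨h', Deriv.exch ?_ d3⟩
    simpa using (List.perm_middle (a := A) (l₁ := Δ) (l₂ := Γ))


private theorem lt_succ_max₂ (a b : Ordinal.{w}) : a ≤ max a b ∧ b ≤ max a b :=
  ⟨le_max_left a b, le_max_right a b⟩

set_option maxHeartbeats 1000000 in
private lemma deriv_lift.{v, w} {u : ℕ → List Tm → Fm} {h : Ordinal.{v}}
    {Γ : List Fm} {C : Fm} (d : Deriv u h Γ C) :
    ∃ h' : Ordinal.{w}, Deriv u h' Γ C := by
  classical
  induction d with
  | idPi π π' e => exact ⟨0, .idPi π π' e⟩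
  | exch p _ ih => obtain ⟨h', d⟩ := ih; exact ⟨h', .exch p d⟩
  | contr _ _ ih =>
    obtain ⟨h', d⟩ := ih; exact ⟨Order.succ h', .contr (Order.lt_succ _) d⟩
  | mc _ _ _ _ ih1 ih2 =>
    obtain ⟨h1, d1⟩ := ih1; obtain ⟨h2, d2⟩ := ih2
    exact ⟨Order.succ (max h1 h2),
      .mc ((le_max_left h1 h2).trans_lt (Order.lt_succ _))
        ((le_max_right h1 h2).trans_lt (Order.lt_succ _)) d1 d2⟩
  | botL => exact ⟨0, .botL⟩
  | topR => exact ⟨0, .topR⟩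
  | andL1 _ _ ih =>
    obtain ⟨h', d⟩ := ih; exact ⟨Order.succ h', .andL1 (Order.lt_succ _) d⟩
  | andL2 _ _ ih =>
    obtain ⟨h', d⟩ := ih; exact ⟨Order.succ h', .andL2 (Order.lt_succ _) d⟩
  | andR _ _ _ _ ih1 ih2 =>
    obtain ⟨h1, d1⟩ := ih1; obtain ⟨h2, d2⟩ := ih2
    exact ⟨Order.succ (max h1 h2),
      .andR ((le_max_left h1 h2).trans_lt (Order.lt_succ _))
        ((le_max_right h1 h2).trans_lt (Order.lt_succ _)) d1 d2⟩
  | orL _ _ _ _ ih1 ih2 =>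
    obtain ⟨h1, d1⟩ := ih1; obtain ⟨h2, d2⟩ := ih2
    exact ⟨Order.succ (max h1 h2),
      .orL ((le_max_left h1 h2).trans_lt (Order.lt_succ _))
        ((le_max_right h1 h2).trans_lt (Order.lt_succ _)) d1 d2⟩
  | orR1 _ _ ih =>
    obtain ⟨h', d⟩ := ih; exact ⟨Order.succ h', .orR1 (Order.lt_succ _) d⟩
  | orR2 _ _ ih =>
    obtain ⟨h', d⟩ := ih; exact ⟨Order.succ h', .orR2 (Order.lt_succ _) d⟩
  | impL _ _ _ _ ih1 ih2 =>
    obtain ⟨h1, d1⟩ := ih1; obtain ⟨h2, d2⟩ := ih2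
    exact ⟨Order.succ (max h1 h2),
      .impL ((le_max_left h1 h2).trans_lt (Order.lt_succ _))
        ((le_max_right h1 h2).trans_lt (Order.lt_succ _)) d1 d2⟩
  | impR _ _ ih =>
    obtain ⟨h', d⟩ := ih; exact ⟨Order.succ h', .impR (Order.lt_succ _) d⟩
  | allL t _ _ ih =>
    obtain ⟨h', d⟩ := ih; exact ⟨Order.succ h', .allL t (Order.lt_succ _) d⟩
  | allR hv _ hf _ ih =>
    obtain ⟨h', d⟩ := ih; exact ⟨Order.succ h', .allR hv (Order.lt_succ _) hf d⟩
  | exL hv _ hf _ ih =>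
    obtain ⟨h', d⟩ := ih; exact ⟨Order.succ h', .exL hv (Order.lt_succ _) hf d⟩
  | exR t _ _ ih =>
    obtain ⟨h', d⟩ := ih; exact ⟨Order.succ h', .exR t (Order.lt_succ _) d⟩
  | nabL a _ ha _ ih =>
    obtain ⟨h', d⟩ := ih; exact ⟨Order.succ h', .nabL a (Order.lt_succ _) ha d⟩
  | nabR a _ ha _ ih =>
    obtain ⟨h', d⟩ := ih; exact ⟨Order.succ h', .nabR a (Order.lt_succ _) ha d⟩
  | eqR => exact ⟨0, .eqR⟩
  | eqL hf _ _ ih =>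
    choose! g hg using ih
    exact ⟨Order.succ (⨆ θ, g θ),
      .eqL g (fun θ => (Ordinal.le_iSup g θ).trans_lt (Order.lt_succ _)) hg⟩
  | defL _ _ ih =>
    obtain ⟨h', d⟩ := ih; exact ⟨Order.succ h', .defL (Order.lt_succ _) d⟩
  | defR _ _ ih =>
    obtain ⟨h', d⟩ := ih; exact ⟨Order.succ h', .defR (Order.lt_succ _) d⟩
  | natRz => exact ⟨0, .natRz⟩
  | natRs _ _ ih =>
    obtain ⟨h', d⟩ := ih; exact ⟨Order.succ h', .natRs (Order.lt_succ _) d⟩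
  | natL j _ _ _ hj _ _ _ ih1 ih2 ih3 =>
    obtain ⟨h1, d1⟩ := ih1; obtain ⟨h2, d2⟩ := ih2; obtain ⟨h3, d3⟩ := ih3
    refine ⟨Order.succ (max h1 (max h2 h3)), .natL j ?_ ?_ ?_ hj d1 d2 d3⟩
    · exact (le_max_left _ _).trans_lt (Order.lt_succ _)
    · exact ((le_max_left h2 h3).trans (le_max_right _ _)).trans_lt (Order.lt_succ _)
    · exact ((le_max_right h2 h3).trans (le_max_right _ _)).trans_lt (Order.lt_succ _)

/-- support extension in LG^ω.  If `Σ, h ; Γ ⊢ B[h a⃗/x]` is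
provable, where `{a⃗} = supp(B)` and `h` is fresh (not in `Σ`, not free in `Γ`
or `B`), and `c⃗` is a list of nominal constants not in `supp(B)`, then
`Σ, h' ; Γ ⊢ B[h' a⃗ c⃗/x]` is provable for a fresh variable `h'`. -/
theorem support_extension {u : ℕ → List Tm → Fm}
    (hu : ∀ p ts θ, Fm.substF θ (u p ts) = u p (ts.map (Tm.subst θ)))
    {Γ : List Fm} {B : Fm} (hv hv' : ℕ) (cs : List ℕ)
    (hcs : ∀ c ∈ cs, c ∉ B.supp)
    (hfresh : hv ∉ fvCtx Γ ∪ (Fm.all B).fv 0)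
    (hfresh' : hv' ∉ fvCtx Γ ∪ (Fm.all B).fv 0)
    (hprov : ∃ h, Deriv u h Γ (Fm.inst B (raised hv B))) :
    ∃ h, Deriv u h Γ
      (Fm.inst B (appList (Tm.var hv') (suppNoms B ++ cs.map Tm.nom))) := by
  classical
  obtain ⟨hpre, dpre⟩ := hprov
  obtain ⟨h0, d0⟩ := deriv_lift dpre
  set t := appList (Tm.var hv') (suppNoms B ++ cs.map Tm.nom) with ht
  have dAll : Deriv u (h0 + 1) Γ (Fm.all B) := by
    refine Deriv.allR hv ?_ hfresh d0
    rw [Ordinal.add_one_eq_succ]; exact Order.lt_succ h0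
  have dId : Deriv u 0 (Fm.inst B t :: Γ) (Fm.inst B t) :=
    Deriv.idPi 1 1 rfl
  have dAllL : Deriv u 1 (Fm.all B :: Γ) (Fm.inst B t) :=
    Deriv.allL t zero_lt_one dId
  have lt1 : h0 + 1 < h0 + 2 := (add_lt_add_iff_left h0).2 one_lt_two
  have lt2 : (1 : Ordinal) < h0 + 2 :=
    lt_of_lt_of_le one_lt_two (le_add_self (a := 2) (b := h0))
  have dMc : Deriv u (h0 + 2) (Γ ++ Γ) (Fm.inst B t) :=
    Deriv.mc lt1 lt2 dAll dAllL
  have dMc' : Deriv u (h0 + 2) (Γ ++ (Γ ++ [])) (Fm.inst B t) := by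
    simpa using dMc
  obtain ⟨h', d'⟩ := contr_list Γ (h0 + 2) [] (Fm.inst B t) dMc'
  exact ⟨h', by simpa using d'⟩
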